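/- arXiv:2412.11264 — 3 statements merged into one kernel-verified Lean document; each statement's English description precedes it below -/
import Mathlib

section
/- Let $a \ge 0$, $b \neq 0$, $c \neq 0$, $V_0 \ge 0$, and let $(\Delta_i)_{i \ge 0}$ be positive reals (the time-step sizes). Let $(u_i)_{i \ge 0}$ be any sequence of nonnegative reals. Define recursively, for $i \ge 0$: $\alpha_i = \widehat{V}_i\,\frac{e^{b\Delta_i}-1}{b} + \frac{a}{b}\big(\frac{e^{b\Delta_i}-1}{b} - \Delta_i\big)$, $\sigma_i = c\,\frac{e^{b\Delta_i}-1}{b}$, $z_i = \frac{u_i - \alpha_i}{\sigma_i}$, and $\widehat{V}_{i+1} = \widehat{V}_i + a\Delta_i + b\,u_i + c\,z_i$, with $\widehat{V}_0 = V_0$. Then $\widehat{V}_i \ge 0$ and $\alpha_i \ge 0$ for every $i \ge 0$. -/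
open Real

lemma key1 (x : ℝ) : 0 ≤ x * Real.exp x - Real.exp x + 1 := by
  have h : 1 - x ≤ Real.exp (-x) := by
    have := Real.add_one_le_exp (-x); linarith
  have hx : 0 < Real.exp x := Real.exp_pos x
  have : (1 - x) * Real.exp x ≤ Real.exp (-x) * Real.exp x :=
    mul_le_mul_of_nonneg_right h hx.le
  rw [← Real.exp_add] at this
  simp at this
  nlinarith

lemma key2 (x : ℝ) : 0 ≤ Real.exp x - 1 - x := by
  have := Real.add_one_le_exp x; linarith

lemma keyE {b d : ℝ} (hb : b ≠ 0) (hd : 0 < d) :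
    0 < (Real.exp (b * d) - 1) / b := by
  rcases lt_or_gt_of_ne hb with h | h
  · have hx : b * d < 0 := mul_neg_of_neg_of_pos h hd
    have : Real.exp (b * d) < 1 := by
      rw [← Real.exp_zero]; exact Real.exp_lt_exp.mpr hx
    exact div_pos_of_neg_of_neg (by linarith) h
  · have hx : 0 < b * d := mul_pos h hd
    have : 1 < Real.exp (b * d) := by
      rw [← Real.exp_zero]; exact Real.exp_lt_exp.mpr hx
    exact div_pos (by linarith) h

/-- Non-negativity of the iVi scheme: the discretized process `Vh` and the mean
parameters `α` stay nonnegative. -/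
theorem stmt_1 (a b c V0 : ℝ) (ha : 0 ≤ a) (hb : b ≠ 0) (hc : c ≠ 0) (hV0 : 0 ≤ V0)
    (Δ : ℕ → ℝ) (hΔ : ∀ i, 0 < Δ i)
    (u : ℕ → ℝ) (hu : ∀ i, 0 ≤ u i)
    (Vh α σ z : ℕ → ℝ)
    (hVzero : Vh 0 = V0)
    (hα : ∀ i, α i = Vh i * ((Real.exp (b * Δ i) - 1) / b)
        + a / b * ((Real.exp (b * Δ i) - 1) / b - Δ i))
    (hσ : ∀ i, σ i = c * ((Real.exp (b * Δ i) - 1) / b))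
    (hz : ∀ i, z i = (u i - α i) / σ i)
    (hV : ∀ i, Vh (i + 1) = Vh i + a * Δ i + b * u i + c * z i) :
    ∀ i, 0 ≤ Vh i ∧ 0 ≤ α i := by
  have hE : ∀ i, 0 < (Real.exp (b * Δ i) - 1) / b := fun i => keyE hb (hΔ i)
  have hαnn : ∀ i, 0 ≤ Vh i → 0 ≤ α i := by
    intro i hVi
    rw [hα i]
    have h1 : 0 ≤ Vh i * ((Real.exp (b * Δ i) - 1) / b) :=
      mul_nonneg hVi (hE i).le
    have h2 : a / b * ((Real.exp (b * Δ i) - 1) / b - Δ i)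
        = a * (Real.exp (b * Δ i) - 1 - b * Δ i) / b ^ 2 := by
      field_simp
    have h3 : 0 ≤ a / b * ((Real.exp (b * Δ i) - 1) / b - Δ i) := by
      rw [h2]
      apply div_nonneg (mul_nonneg ha (key2 _)) (sq_nonneg b)
    linarith
  have hVnn : ∀ i, 0 ≤ Vh i := by
    intro i
    induction i with
    | zero => rw [hVzero]; exact hV0
    | succ n ih =>
      have hEpos : 0 < (Real.exp (b * Δ n) - 1) / b := hE n
      have hne : Real.exp (b * Δ n) - 1 ≠ 0 := by
        intro h
        rw [h] at hEpos
        simp at hEpos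
      have hform : Vh (n + 1)
          = u n * Real.exp (b * Δ n) / ((Real.exp (b * Δ n) - 1) / b)
            + a * ((b * Δ n) * Real.exp (b * Δ n) - Real.exp (b * Δ n) + 1)
              / (b ^ 2 * ((Real.exp (b * Δ n) - 1) / b)) := by
        rw [hV n, hz n, hσ n, hα n]
        field_simp [show Real.exp (Δ n * b) - 1 ≠ 0 by rwa [mul_comm]]
        ring
      rw [hform]
      have h1 : 0 ≤ u n * Real.exp (b * Δ n) / ((Real.exp (b * Δ n) - 1) / b) :=
        div_nonneg (mul_nonneg (hu n) (Real.exp_pos _).le) hEpos.le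
      have h2 : 0 ≤ a * ((b * Δ n) * Real.exp (b * Δ n) - Real.exp (b * Δ n) + 1)
          / (b ^ 2 * ((Real.exp (b * Δ n) - 1) / b)) :=
        div_nonneg (mul_nonneg ha (key1 _))
          (mul_nonneg (sq_nonneg b) hEpos.le)
      linarith
  intro i
  exact ⟨hVnn i, hαnn i (hVnn i)⟩
end

section
/- Let $a \ge 0$, $v \ge 0$, $b \neq 0$, $c \neq 0$, $\Delta > 0$, with not both $v = 0$ and $a = 0$. Set $\alpha = v\,\frac{e^{b\Delta}-1}{b} + \frac{a}{b}\big(\frac{e^{b\Delta}-1}{b} - \Delta\big)$ and $\sigma = c\,\frac{e^{b\Delta}-1}{b}$, and let $f(x) = \sqrt{\frac{\lambda}{2\pi x^3}}\exp\big(-\frac{\lambda(x-\mu)^2}{2\mu^2 x}\big)$ be the Inverse Gaussian density with parameters $\mu = \alpha$, $\lambda = \alpha^2/\sigma^2$. Then $\int_0^\infty \Big(v + a\Delta + b\,x + c\,\frac{x-\alpha}{\sigma}\Big) f(x)\, dx = v\, e^{b\Delta} + \frac{a}{b}\big(e^{b\Delta} - 1\big)$. -/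
open Real MeasureTheory Set Filter Topology

namespace IViAux

noncomputable def Phi (t : ℝ) : ℝ := ∫ s in (0:ℝ)..t, Real.exp (-s^2/2)

noncomputable def K : ℝ := ∫ s in Set.Ioi (0:ℝ), Real.exp (-s^2/2)

lemma contExp : Continuous fun s : ℝ => Real.exp (-s^2/2) := by continuity

lemma integrableExp : Integrable (fun s : ℝ => Real.exp (-s^2/2)) := by
  have h := integrable_exp_neg_mul_sq (show (0:ℝ) < 1/2 by norm_num)
  have he : (fun s : ℝ => Real.exp (-s^2/2)) = fun x : ℝ => Real.exp (-(1/2) * x^2) := by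
    funext x; ring_nf
  rw [he]; exact h

lemma phi_hasDerivAt (t : ℝ) : HasDerivAt Phi (Real.exp (-t^2/2)) t := by
  show HasDerivAt (fun u => ∫ s in (0:ℝ)..u, Real.exp (-s^2/2)) _ t
  exact intervalIntegral.integral_hasDerivAt_right (contExp.intervalIntegrable _ _)
    (contExp.stronglyMeasurableAtFilter _ _) contExp.continuousAt

lemma phi_tendsto_atTop : Tendsto Phi atTop (𝓝 K) :=
  intervalIntegral_tendsto_integral_Ioi 0 integrableExp.integrableOn tendsto_id

lemma iic_eq : ∫ s in Set.Iic (0:ℝ), Real.exp (-s^2/2) = K := by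
  have h := integral_comp_neg_Iic (0:ℝ) (fun s => Real.exp (-s^2/2))
  simp only [neg_zero] at h
  rw [show K = ∫ s in Set.Ioi (0:ℝ), Real.exp (-s^2/2) from rfl, ← h]
  congr 1
  funext x
  rw [neg_sq]

lemma phi_tendsto_atBot : Tendsto Phi atBot (𝓝 (-K)) := by
  have h := intervalIntegral_tendsto_integral_Iic 0 integrableExp.integrableOn
    (tendsto_id (α := ℝ))
  rw [iic_eq] at h
  have he : Phi = fun t => - ∫ s in t..(0:ℝ), Real.exp (-s^2/2) := by
    funext t; rw [Phi, intervalIntegral.integral_symm]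
  rw [he]
  exact h.neg

lemma twoK : K + K = Real.sqrt (2*Real.pi) := by
  have h1 : ∫ s : ℝ, Real.exp (-s^2/2) = Real.sqrt (2*Real.pi) := by
    have he : (fun s : ℝ => Real.exp (-s^2/2)) = fun x : ℝ => Real.exp (-(1/2) * x^2) := by
      funext x; ring_nf
    rw [he, integral_gaussian, show Real.pi / (1/2) = 2*Real.pi by ring]
  rw [← h1, ← intervalIntegral.integral_Iic_add_Ioi (b := (0:ℝ)) integrableExp.integrableOn
    integrableExp.integrableOn, iic_eq]
  rfl

lemma sqrt_tendsto_atTop : Tendsto Real.sqrt atTop atTop := by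
  rw [show Real.sqrt = fun x : ℝ => x ^ (1/(2:ℝ)) from funext fun x => Real.sqrt_eq_rpow x]
  exact tendsto_rpow_atTop (by norm_num)

lemma sqrt_tendsto_zero : Tendsto Real.sqrt (𝓝[>] (0:ℝ)) (𝓝[>] (0:ℝ)) := by
  rw [tendsto_nhdsWithin_iff]
  constructor
  · have := (Real.continuous_sqrt.tendsto 0).mono_left (nhdsWithin_le_nhds (s := Ioi (0:ℝ)))
    simpa using this
  · filter_upwards [self_mem_nhdsWithin] with x hx
    exact Real.sqrt_pos.2 hx

lemma ig_moment (m l A B : ℝ) (hm : 0 < m) (hl : 0 < l) :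
    (∫ x in Set.Ioi (0:ℝ), (A + B * x) *
      (Real.sqrt (l / (2 * Real.pi * x ^ 3)) *
        Real.exp (-(l * (x - m) ^ 2 / (2 * m ^ 2 * x)))))
      = A + B * m := by
  have hπ : (0:ℝ) < 2 * Real.pi := by positivity
  set sπ : ℝ := Real.sqrt (2*Real.pi) with hsπdef
  have hsπ : 0 < sπ := Real.sqrt_pos.2 hπ
  have hsπ2 : sπ^2 = 2*Real.pi := Real.sq_sqrt hπ.le
  set sl : ℝ := Real.sqrt l with hsldef
  have hsl : 0 < sl := Real.sqrt_pos.2 hl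
  have hsl2 : sl^2 = l := Real.sq_sqrt hl.le
  set c : ℝ := Real.exp (2*l/m) with hcdef
  set D : ℝ → ℝ := fun x => Real.sqrt (l / (2 * Real.pi * x ^ 3)) *
        Real.exp (-(l * (x - m) ^ 2 / (2 * m ^ 2 * x))) with hDdef
  set g : ℝ → ℝ := fun x => sl/m * Real.sqrt x - sl * (Real.sqrt x)⁻¹ with hgdef
  set h : ℝ → ℝ := fun x => sl/m * Real.sqrt x + sl * (Real.sqrt x)⁻¹ with hhdef
  set N : ℝ → ℝ := fun t => (Phi t + K) / sπ with hNdef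
  set dg : ℝ → ℝ := fun x => sl/m * (1/(2*Real.sqrt x)) + sl * (1/(2*Real.sqrt x)/(Real.sqrt x)^2)
    with hdgdef
  set dh : ℝ → ℝ := fun x => sl/m * (1/(2*Real.sqrt x)) - sl * (1/(2*Real.sqrt x)/(Real.sqrt x)^2)
    with hdhdef
  -- limits of g and h
  have hterm1_top : Tendsto (fun x => sl/m * Real.sqrt x) atTop atTop :=
    (tendsto_const_mul_atTop_of_pos (by positivity)).2 sqrt_tendsto_atTop
  have hterm2_top : Tendsto (fun x => sl * (Real.sqrt x)⁻¹) atTop (𝓝 0) := by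
    have := (sqrt_tendsto_atTop.inv_tendsto_atTop).const_mul sl
    simpa using this
  have hg_top : Tendsto g atTop atTop := by
    rw [hgdef]
    simp only [sub_eq_add_neg]
    exact hterm1_top.atTop_add (hterm2_top.neg.congr (fun x => rfl) |>.mono_left le_rfl) |>.congr
      (fun x => rfl)
  have hh_top : Tendsto h atTop atTop := hterm1_top.atTop_add hterm2_top
  have hterm1_zero : Tendsto (fun x => sl/m * Real.sqrt x) (𝓝[>] (0:ℝ)) (𝓝 0) := by
    have := ((sqrt_tendsto_zero.mono_right nhdsWithin_le_nhds).const_mul (sl/m))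
    simpa using this
  have hterm2_zero : Tendsto (fun x => sl * (Real.sqrt x)⁻¹) (𝓝[>] (0:ℝ)) atTop :=
    (tendsto_const_mul_atTop_of_pos hsl).2 sqrt_tendsto_zero.inv_tendsto_nhdsGT_zero
  have hg_bot : Tendsto g (𝓝[>] (0:ℝ)) atBot := by
    rw [hgdef]
    simp only [sub_eq_add_neg]
    exact hterm1_zero.add_atBot (tendsto_neg_atTop_atBot.comp hterm2_zero)
  have hh_bot : Tendsto h (𝓝[>] (0:ℝ)) atTop := hterm1_zero.add_atTop hterm2_zero
  -- derivative of N
  have hN' : ∀ t, HasDerivAt N (Real.exp (-t^2/2)/sπ) t := fun t =>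
    ((phi_hasDerivAt t).add_const K).div_const sπ
  -- derivatives of g and h
  have hdg' : ∀ x ∈ Ioi (0:ℝ), HasDerivAt g (dg x) x := by
    intro x hx
    have hx0 : (0:ℝ) < x := hx
    have hs := Real.hasDerivAt_sqrt hx0.ne'
    have hsx : Real.sqrt x ≠ 0 := (Real.sqrt_pos.2 hx0).ne'
    have h1 : HasDerivAt (fun y => sl/m * Real.sqrt y) (sl/m * (1/(2*Real.sqrt x))) x :=
      hs.const_mul _
    have h2 : HasDerivAt (fun y => sl * (Real.sqrt y)⁻¹)
        (sl * (-(1/(2*Real.sqrt x)) / (Real.sqrt x)^2)) x := (hs.inv hsx).const_mul _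
    have h3 := h1.sub h2
    exact h3.congr_deriv (by rw [hdgdef]; ring)
  have hdh' : ∀ x ∈ Ioi (0:ℝ), HasDerivAt h (dh x) x := by
    intro x hx
    have hx0 : (0:ℝ) < x := hx
    have hs := Real.hasDerivAt_sqrt hx0.ne'
    have hsx : Real.sqrt x ≠ 0 := (Real.sqrt_pos.2 hx0).ne'
    have h1 : HasDerivAt (fun y => sl/m * Real.sqrt y) (sl/m * (1/(2*Real.sqrt x))) x :=
      hs.const_mul _
    have h2 : HasDerivAt (fun y => sl * (Real.sqrt y)⁻¹)
        (sl * (-(1/(2*Real.sqrt x)) / (Real.sqrt x)^2)) x := (hs.inv hsx).const_mul _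
    have h3 := h1.add h2
    exact h3.congr_deriv (by rw [hdhdef]; ring)
  -- key algebraic identities at a point x > 0
  have halg : ∀ x ∈ Ioi (0:ℝ),
      c * Real.exp (-(h x)^2/2) = Real.exp (-(g x)^2/2)
      ∧ Real.exp (-(g x)^2/2) = Real.exp (-(l * (x - m) ^ 2 / (2 * m ^ 2 * x)))
      ∧ Real.sqrt (l / (2 * Real.pi * x ^ 3)) = sl/(sπ*(x*Real.sqrt x)) := by
    intro x hx
    have hx0 : (0:ℝ) < x := hx
    have hsx : 0 < Real.sqrt x := Real.sqrt_pos.2 hx0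
    have hsx2 : (Real.sqrt x)^2 = x := Real.sq_sqrt hx0.le
    refine ⟨?_, ?_, ?_⟩
    · rw [hcdef, ← Real.exp_add]
      congr 1
      have hgh : (h x)^2 = (g x)^2 + 4*l/m := by
        rw [hgdef, hhdef]
        simp only
        field_simp
        linear_combination (4*m*(Real.sqrt x)^2) * hsl2
      rw [hgh]; ring
    · congr 1
      have : (g x)^2 = l * (x - m)^2 / (m^2 * x) := by
        rw [hgdef]
        simp only
        field_simp
        linear_combination (x*((Real.sqrt x)^2 - m)^2) * hsl2 + (l*((Real.sqrt x)^2*x - m^2)) * hsx2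
      rw [this]; ring
    · rw [show l / (2 * Real.pi * x ^ 3) = (sl/(sπ*(x*Real.sqrt x)))^2 by
        field_simp
        linear_combination (l*(Real.sqrt x)^2)*hsπ2 + (2*Real.pi*l)*hsx2 - (2*Real.pi*x)*hsl2]
      exact Real.sqrt_sq (by positivity)
  -- antiderivatives
  set F : ℝ → ℝ := fun x => if x ≤ 0 then 0 else N (g x) + c * N (-h x) with hFdef
  set G : ℝ → ℝ := fun x => if x ≤ 0 then 0 else m * (N (g x) - c * N (-h x)) with hGdef
  have hF' : ∀ x ∈ Ioi (0:ℝ), HasDerivAt F (D x) x := by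
    intro x hx
    have hx0 : (0:ℝ) < x := hx
    have hsx : 0 < Real.sqrt x := Real.sqrt_pos.2 hx0
    have hsx2 : (Real.sqrt x)^2 = x := Real.sq_sqrt hx0.le
    obtain ⟨h1, h2, h3⟩ := halg x hx
    have hev : F =ᶠ[𝓝 x] fun y => N (g y) + c * N (-h y) := by
      filter_upwards [Ioi_mem_nhds hx0] with y hy
      simp [hFdef, not_le.2 (show (0:ℝ) < y from hy)]
    have hP : HasDerivAt (fun y => N (g y)) (Real.exp (-(g x)^2/2)/sπ * dg x) x :=
      (hN' (g x)).comp x (hdg' x hx)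
    have hQ : HasDerivAt (fun y => N (-h y)) (Real.exp (-(h x)^2/2)/sπ * (-dh x)) x := by
      have := (hN' (-h x)).comp x ((hdh' x hx).neg)
      rw [neg_sq] at this; exact this
    have hder := hP.add (hQ.const_mul c)
    have heq : Real.exp (-(g x)^2/2)/sπ * dg x
        + c * (Real.exp (-(h x)^2/2)/sπ * (-dh x)) = D x := by
      rw [hDdef]
      simp only
      rw [h3, ← h2,
        show c * (Real.exp (-(h x)^2/2)/sπ * (-dh x))
          = (c * Real.exp (-(h x)^2/2)) * (-dh x) / sπ by ring, h1, hdgdef, hdhdef]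
      simp only
      rw [hsx2]
      field_simp
      ring
    have hder' : HasDerivAt (fun y => N (g y) + c * N (-h y)) (D x) x := by
      rw [← heq]; exact hder
    exact hder'.congr_of_eventuallyEq hev
  have hG' : ∀ x ∈ Ioi (0:ℝ), HasDerivAt G (x * D x) x := by
    intro x hx
    have hx0 : (0:ℝ) < x := hx
    have hsx : 0 < Real.sqrt x := Real.sqrt_pos.2 hx0
    have hsx2 : (Real.sqrt x)^2 = x := Real.sq_sqrt hx0.le
    obtain ⟨h1, h2, h3⟩ := halg x hx
    have hev : G =ᶠ[𝓝 x] fun y => m * (N (g y) - c * N (-h y)) := by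
      filter_upwards [Ioi_mem_nhds hx0] with y hy
      simp [hGdef, not_le.2 (show (0:ℝ) < y from hy)]
    have hP : HasDerivAt (fun y => N (g y)) (Real.exp (-(g x)^2/2)/sπ * dg x) x :=
      (hN' (g x)).comp x (hdg' x hx)
    have hQ : HasDerivAt (fun y => N (-h y)) (Real.exp (-(h x)^2/2)/sπ * (-dh x)) x := by
      have := (hN' (-h x)).comp x ((hdh' x hx).neg)
      rw [neg_sq] at this; exact this
    have hder := (hP.sub (hQ.const_mul c)).const_mul m
    have heq : m * (Real.exp (-(g x)^2/2)/sπ * dg x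
        - c * (Real.exp (-(h x)^2/2)/sπ * (-dh x))) = x * D x := by
      rw [hDdef]
      simp only
      rw [h3, ← h2,
        show c * (Real.exp (-(h x)^2/2)/sπ * (-dh x))
          = (c * Real.exp (-(h x)^2/2)) * (-dh x) / sπ by ring, h1, hdgdef, hdhdef]
      simp only
      rw [hsx2]
      field_simp
      ring
    have hder' : HasDerivAt (fun y => m * (N (g y) - c * N (-h y))) (x * D x) x := by
      rw [← heq]; exact hder
    exact hder'.congr_of_eventuallyEq hev
  -- limits at +infinity
  have tg_top : Tendsto (fun y => N (g y)) atTop (𝓝 ((K + K)/sπ)) := by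
    have := ((phi_tendsto_atTop.comp hg_top).add_const K).div_const sπ
    exact this
  have th_top : Tendsto (fun y => N (-h y)) atTop (𝓝 ((-K + K)/sπ)) := by
    have := ((phi_tendsto_atBot.comp (tendsto_neg_atTop_atBot.comp hh_top)).add_const K).div_const sπ
    exact this
  have tg_bot : Tendsto (fun y => N (g y)) (𝓝[>] (0:ℝ)) (𝓝 ((-K + K)/sπ)) := by
    have := ((phi_tendsto_atBot.comp hg_bot).add_const K).div_const sπ
    exact this
  have th_bot : Tendsto (fun y => N (-h y)) (𝓝[>] (0:ℝ)) (𝓝 ((-K + K)/sπ)) := by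
    have := ((phi_tendsto_atBot.comp (tendsto_neg_atTop_atBot.comp hh_bot)).add_const K).div_const sπ
    exact this
  have hF_top : Tendsto F atTop (𝓝 1) := by
    have hev : (fun y => N (g y) + c * N (-h y)) =ᶠ[atTop] F := by
      filter_upwards [eventually_gt_atTop (0:ℝ)] with y hy
      simp [hFdef, not_le.2 hy]
    have t := tg_top.add (th_top.const_mul c)
    have hval : (K + K)/sπ + c * ((-K + K)/sπ) = 1 := by
      rw [twoK, ← hsπdef]
      simp [div_self hsπ.ne']
    rw [hval] at t
    exact t.congr' hev
  have hG_top : Tendsto G atTop (𝓝 m) := by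
    have hev : (fun y => m * (N (g y) - c * N (-h y))) =ᶠ[atTop] G := by
      filter_upwards [eventually_gt_atTop (0:ℝ)] with y hy
      simp [hGdef, not_le.2 hy]
    have t := (tg_top.sub (th_top.const_mul c)).const_mul m
    have hval : m * ((K + K)/sπ - c * ((-K + K)/sπ)) = m := by
      rw [twoK, ← hsπdef]
      simp [div_self hsπ.ne']
    rw [hval] at t
    exact t.congr' hev
  -- limits at 0+
  have hF_0 : Tendsto F (𝓝[>] (0:ℝ)) (𝓝 0) := by
    have hev : (fun y => N (g y) + c * N (-h y)) =ᶠ[𝓝[>] (0:ℝ)] F := by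
      filter_upwards [self_mem_nhdsWithin] with y hy
      simp [hFdef, not_le.2 (show (0:ℝ) < y from hy)]
    have t := tg_bot.add (th_bot.const_mul c)
    have hval : (-K + K)/sπ + c * ((-K + K)/sπ) = 0 := by simp
    rw [hval] at t
    exact t.congr' hev
  have hG_0 : Tendsto G (𝓝[>] (0:ℝ)) (𝓝 0) := by
    have hev : (fun y => m * (N (g y) - c * N (-h y))) =ᶠ[𝓝[>] (0:ℝ)] G := by
      filter_upwards [self_mem_nhdsWithin] with y hy
      simp [hGdef, not_le.2 (show (0:ℝ) < y from hy)]
    have t := (tg_bot.sub (th_bot.const_mul c)).const_mul m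
    have hval : m * ((-K + K)/sπ - c * ((-K + K)/sπ)) = 0 := by simp
    rw [hval] at t
    exact t.congr' hev
  -- continuity at 0 within Ici
  have hFc : ContinuousWithinAt F (Ici (0:ℝ)) 0 := by
    have hF0 : F 0 = 0 := by simp [hFdef]
    rw [ContinuousWithinAt, hF0, ← Set.Ioi_insert, nhdsWithin_insert]
    exact tendsto_sup.2 ⟨by simpa [hF0] using tendsto_pure_nhds F 0, hF_0⟩
  have hGc : ContinuousWithinAt G (Ici (0:ℝ)) 0 := by
    have hG0 : G 0 = 0 := by simp [hGdef]
    rw [ContinuousWithinAt, hG0, ← Set.Ioi_insert, nhdsWithin_insert]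
    exact tendsto_sup.2 ⟨by simpa [hG0] using tendsto_pure_nhds G 0, hG_0⟩
  -- nonnegativity
  have hDnn : ∀ x ∈ Ioi (0:ℝ), 0 ≤ D x := by
    intro x hx
    rw [hDdef]
    positivity
  have hxDnn : ∀ x ∈ Ioi (0:ℝ), 0 ≤ x * D x := fun x hx =>
    mul_nonneg (le_of_lt hx) (hDnn x hx)
  -- integrals
  have hI1 : ∫ x in Ioi (0:ℝ), D x = 1 := by
    have := integral_Ioi_of_hasDerivAt_of_nonneg hFc hF' hDnn hF_top
    simpa [hFdef] using this
  have hI2 : ∫ x in Ioi (0:ℝ), x * D x = m := by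
    have := integral_Ioi_of_hasDerivAt_of_nonneg hGc hG' hxDnn hG_top
    simpa [hGdef] using this
  have hJ1 : IntegrableOn D (Ioi (0:ℝ)) :=
    integrableOn_Ioi_deriv_of_nonneg hFc hF' hDnn hF_top
  have hJ2 : IntegrableOn (fun x => x * D x) (Ioi (0:ℝ)) :=
    integrableOn_Ioi_deriv_of_nonneg hGc hG' hxDnn hG_top
  -- combine
  have hsplit : (∫ x in Set.Ioi (0:ℝ), (A + B * x) *
      (Real.sqrt (l / (2 * Real.pi * x ^ 3)) *
        Real.exp (-(l * (x - m) ^ 2 / (2 * m ^ 2 * x)))))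
      = ∫ x in Set.Ioi (0:ℝ), (A * D x + B * (x * D x)) := by
    refine setIntegral_congr_fun measurableSet_Ioi fun x _ => ?_
    rw [hDdef]
    ring
  rw [hsplit, integral_add (hJ1.const_mul A) (hJ2.const_mul B),
    integral_const_mul, integral_const_mul, hI1, hI2]
  ring

end IViAux

open Real MeasureTheory

/-- First-conditional-moment matching of the iVi scheme: the expectation of the one-step
update under the Inverse Gaussian distribution `IG(α, α²/σ²)` equals the exact conditional
mean of the square-root process. -/
theorem stmt_9 (a v b c Δ : ℝ) (ha : 0 ≤ a) (hv : 0 ≤ v) (hb : b ≠ 0) (hc : c ≠ 0)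
    (hΔ : 0 < Δ) (hva : ¬(v = 0 ∧ a = 0))
    (α σ lam : ℝ)
    (hα : α = v * ((Real.exp (b * Δ) - 1) / b)
        + a / b * ((Real.exp (b * Δ) - 1) / b - Δ))
    (hσ : σ = c * ((Real.exp (b * Δ) - 1) / b))
    (hlam : lam = α ^ 2 / σ ^ 2) :
    ∫ x in Set.Ioi (0 : ℝ),
      (v + a * Δ + b * x + c * ((x - α) / σ))
        * (Real.sqrt (lam / (2 * Real.pi * x ^ 3))
            * Real.exp (-(lam * (x - α) ^ 2 / (2 * α ^ 2 * x))))
      = v * Real.exp (b * Δ) + a / b * (Real.exp (b * Δ) - 1) := by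
  have hbd : b * Δ ≠ 0 := mul_ne_zero hb hΔ.ne'
  have hlt := Real.add_one_lt_exp hbd
  have hebd : 0 < (Real.exp (b * Δ) - 1) / b := by
    rcases lt_or_gt_of_ne hb with hbneg | hbpos
    · apply div_pos_of_neg_of_neg ?_ hbneg
      have : Real.exp (b * Δ) < 1 := Real.exp_lt_one_iff.2 (mul_neg_of_neg_of_pos hbneg hΔ)
      linarith
    · apply div_pos ?_ hbpos
      have := mul_pos hbpos hΔ
      linarith
  have hkey : 0 < ((Real.exp (b * Δ) - 1) / b - Δ) / b := by
    rcases lt_or_gt_of_ne hb with hbneg | hbpos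
    · apply div_pos_of_neg_of_neg ?_ hbneg
      rw [sub_neg, div_lt_iff_of_neg hbneg]
      linarith
    · apply div_pos ?_ hbpos
      rw [sub_pos, lt_div_iff₀ hbpos]
      linarith
  have hα0 : 0 < α := by
    rw [hα]
    have hre : a / b * ((Real.exp (b * Δ) - 1) / b - Δ)
        = a * (((Real.exp (b * Δ) - 1) / b - Δ) / b) := by ring
    rcases not_and_or.mp hva with h0 | h0
    · have hv' : 0 < v := lt_of_le_of_ne hv (Ne.symm h0)
      have t1 := mul_pos hv' hebd
      have t2 : 0 ≤ a / b * ((Real.exp (b * Δ) - 1) / b - Δ) := by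
        rw [hre]; exact mul_nonneg ha hkey.le
      linarith
    · have ha' : 0 < a := lt_of_le_of_ne ha (Ne.symm h0)
      have t1 : 0 ≤ v * ((Real.exp (b * Δ) - 1) / b) := mul_nonneg hv hebd.le
      have t2 : 0 < a / b * ((Real.exp (b * Δ) - 1) / b - Δ) := by
        rw [hre]; exact mul_pos ha' hkey
      linarith
  have hσ0 : σ ≠ 0 := by rw [hσ]; exact mul_ne_zero hc hebd.ne'
  have hσ2 : 0 < σ ^ 2 := (sq_nonneg σ).lt_of_ne (Ne.symm (pow_ne_zero 2 hσ0))
  have hlam0 : 0 < lam := by rw [hlam]; exact div_pos (pow_pos hα0 2) hσ2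
  have key := IViAux.ig_moment α lam (v + a * Δ - c * α / σ) (b + c / σ) hα0 hlam0
  have hLHS : (∫ x in Set.Ioi (0 : ℝ),
      (v + a * Δ + b * x + c * ((x - α) / σ))
        * (Real.sqrt (lam / (2 * Real.pi * x ^ 3))
            * Real.exp (-(lam * (x - α) ^ 2 / (2 * α ^ 2 * x)))))
      = (v + a * Δ - c * α / σ) + (b + c / σ) * α := by
    rw [← key]
    refine MeasureTheory.setIntegral_congr_fun measurableSet_Ioi fun x _ => ?_
    have hfun : v + a * Δ + b * x + c * ((x - α) / σ)
        = (v + a * Δ - c * α / σ) + (b + c / σ) * x := by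
      field_simp
      ring
    rw [hfun]
  rw [hLHS, hα]
  field_simp
  ring
end

section
/- Let $a, b, c, \rho \in \mathbb{R}$ with $c \neq 0$, let $u, w \in \mathbb{C}$, set $\beta = -b - u\rho c$, let $D \in \mathbb{C}$ satisfy $D^2 = \beta^2 + c^2(-2w + u - u^2)$, assume $\beta + D \neq 0$, set $G = \frac{\beta - D}{\beta + D}$, assume $G \neq 1$, and let $T > 0$ be such that for all $t \in [0,T]$ the complex number $\frac{G e^{-Dt} - 1}{G - 1}$ lies off the closed negative real axis $(-\infty, 0]$. Define $\phi(t) = \frac{a}{c^2}\Big((\beta - D)t - 2\,\mathrm{Log}\Big(\frac{G e^{-Dt} - 1}{G - 1}\Big)\Big)$ and $\psi(t) = \frac{\beta - D}{c^2}\cdot\frac{1 - e^{-Dt}}{1 - G e^{-Dt}}$, where $\mathrm{Log}$ is the principal branch of the complex logarithm. Then $\phi(0) = 0$ and for every $t \in [0,T]$, $\phi$ is differentiable at $t$ with $\phi'(t) = a\,\psi(t)$. -/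
open Real Complex

/-- The explicit closed-form `φ` of the Heston model satisfies `φ' = a ψ` with `φ(0) = 0`,
under the branch-avoidance hypothesis (membership in the slit plane, i.e. off the closed
negative real axis) ensuring the principal logarithm is differentiable along the path. -/
theorem stmt_14 (a b c ρ : ℝ) (hc : c ≠ 0) (u w : ℂ)
    (β D G : ℂ)
    (hβ : β = -(b : ℂ) - u * (ρ : ℂ) * (c : ℂ))
    (hD : D ^ 2 = β ^ 2 + (c : ℂ) ^ 2 * (-2 * w + u - u ^ 2))
    (hβD : β + D ≠ 0)
    (hG : G = (β - D) / (β + D))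
    (hG1 : G ≠ 1)
    (T : ℝ) (hT : 0 < T)
    (hslit : ∀ t ∈ Set.Icc (0 : ℝ) T,
      (G * Complex.exp (-D * t) - 1) / (G - 1) ∈ Complex.slitPlane)
    (φ ψ : ℝ → ℂ)
    (hφ : ∀ t : ℝ, φ t = (a : ℂ) / (c : ℂ) ^ 2
        * ((β - D) * t - 2 * Complex.log ((G * Complex.exp (-D * t) - 1) / (G - 1))))
    (hψ : ∀ t : ℝ, ψ t = (β - D) / (c : ℂ) ^ 2
        * ((1 - Complex.exp (-D * t)) / (1 - G * Complex.exp (-D * t)))) :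
    φ 0 = 0 ∧ ∀ t ∈ Set.Icc (0 : ℝ) T, HasDerivAt φ ((a : ℂ) * ψ t) t := by
  have hG1' : G - 1 ≠ 0 := sub_ne_zero.mpr hG1
  have hcC : (c : ℂ) ≠ 0 := Complex.ofReal_ne_zero.mpr hc
  constructor
  · rw [hφ 0]
    simp [div_self hG1']
  · intro t ht
    have hslit' := hslit t ht
    have hfne : (G * Complex.exp (-D * t) - 1) / (G - 1) ≠ 0 :=
      Complex.slitPlane_ne_zero hslit'
    have hnum : G * Complex.exp (-D * t) - 1 ≠ 0 := by
      intro h; exact hfne (by rw [h, zero_div])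
    -- derivative of t ↦ (t : ℂ)
    have h0 : HasDerivAt (fun s : ℝ => (s : ℂ)) 1 t := by
      simpa using (hasDerivAt_id t).ofReal_comp
    have hexp : HasDerivAt (fun s : ℝ => Complex.exp (-D * s))
        (Complex.exp (-D * t) * (-D * 1)) t :=
      ((h0.const_mul (-D)).cexp)
    have hf : HasDerivAt (fun s : ℝ => (G * Complex.exp (-D * s) - 1) / (G - 1))
        (G * (Complex.exp (-D * t) * (-D * 1)) / (G - 1)) t :=
      ((hexp.const_mul G).sub_const 1).div_const (G - 1)
    have hlog := hf.clog_real hslit'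
    have hlin : HasDerivAt (fun s : ℝ => (β - D) * (s : ℂ)) ((β - D) * 1) t :=
      h0.const_mul (β - D)
    have hmain := ((hlin.sub (hlog.const_mul 2)).const_mul ((a : ℂ) / (c : ℂ) ^ 2))
    have heq : HasDerivAt φ
        ((a : ℂ) / (c : ℂ) ^ 2 * ((β - D) * 1 -
          2 * (G * (Complex.exp (-D * t) * (-D * 1)) / (G - 1) /
            ((G * Complex.exp (-D * t) - 1) / (G - 1))))) t := by
      refine hmain.congr_of_eventuallyEq ?_
      filter_upwards with s
      rw [hφ s]; rfl
    convert heq using 1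
    rw [hψ t]
    have hDne : D ≠ 0 := by
      intro h
      apply hG1
      rw [hG, h, sub_zero, add_zero, div_self]
      intro h'; exact hβD (by rw [h, add_zero]; exact h')
    have hxne : Complex.exp (-D * t) ≠ 0 := Complex.exp_ne_zero _
    have h1m : (1 : ℂ) - G * Complex.exp (-D * t) ≠ 0 := by
      rw [← neg_sub]; exact neg_ne_zero.mpr hnum
    subst hG
    have hrw : (1:ℂ) - (β - D) / (β + D) * Complex.exp (-D * t)
        = ((β + D) - (β - D) * Complex.exp (-D * t)) / (β + D) := by
      field_simp
    have hR : (β + D) - (β - D) * Complex.exp (-D * t) ≠ 0 := by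
      intro h
      exact h1m (by rw [hrw, h, zero_div])
    have hrw2 : (β - D) / (β + D) * Complex.exp (-D * t) - 1
        = ((β - D) * Complex.exp (-D * t) - (β + D)) / (β + D) := by
      field_simp
    have hrw3 : (β - D) / (β + D) - 1 = (-(2 * D)) / (β + D) := by
      field_simp; ring
    have hR2 : (β - D) * Complex.exp (-D * t) - (β + D) ≠ 0 := by
      intro h
      apply hR
      rw [← neg_sub ((β - D) * Complex.exp (-D * t)) (β + D), h, neg_zero]
    rw [hrw, hrw2, hrw3]
    rw [div_div_div_cancel_right₀ _ _ _]
    · rw [div_div_eq_mul_div, div_div_eq_mul_div,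
        show (β - D) * Complex.exp (-D * t) - (β + D)
          = -((β + D) - (β - D) * Complex.exp (-D * t)) from by ring,
        div_neg]
      rw [show (β - D) / (β + D) * (Complex.exp (-D * t) * (-D * 1)) * (β + D)
          = (β - D) * (Complex.exp (-D * t) * (-D)) from by
        field_simp]
      set R := β + D - (β - D) * Complex.exp (-D * t) with hRdef
      field_simp
      simp only [neg_mul] at hRdef ⊢
      linear_combination (-(a : ℂ) * (β - D)) * hRdef
    · exact div_ne_zero (neg_ne_zero.mpr (mul_ne_zero two_ne_zero hDne)) hβD
end
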